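/- Let α, β be 2-dimensional affine planes in Minkowski ℝ⁴ such that every direction vector of α is η-orthogonal to every direction vector of β, and neither α nor β contains a timelike direction vector. Then there exists an affine isometry of Minkowski space (composition of Lorentz transformation and translation) mapping α onto the plane {t - x = 0, z = 0} and β onto a plane {t - x = s, y = 0} for some s ∈ ℝ. -/

import Mathlib

/-- The Minkowski bilinear form on ℝ⁴, coordinates ordered (t, x, y, z). -/
def minkowski (a b : Fin 4 → ℝ) : ℝ :=
  -(a 0 * b 0) + a 1 * b 1 + a 2 * b 2 + a 3 * b 3

lemma mink_comm (x y : Fin 4 → ℝ) : minkowski x y = minkowski y x := by unfold minkowski; ring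
lemma mink_add_left (x y z : Fin 4 → ℝ) : minkowski (x + y) z = minkowski x z + minkowski y z := by
  simp [minkowski]; ring
lemma mink_smul_left (c : ℝ) (x y : Fin 4 → ℝ) : minkowski (c • x) y = c * minkowski x y := by
  simp [minkowski]; ring
lemma mink_add_right (x y z : Fin 4 → ℝ) : minkowski x (y + z) = minkowski x y + minkowski x z := by
  simp [minkowski]; ring
lemma mink_smul_right (c : ℝ) (x y : Fin 4 → ℝ) : minkowski x (c • y) = c * minkowski x y := by
  simp [minkowski]; ring
lemma mink_sub_left (x y z : Fin 4 → ℝ) : minkowski (x - y) z = minkowski x z - minkowski y z := by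
  simp [minkowski]; ring
lemma mink_sub_right (x y z : Fin 4 → ℝ) : minkowski x (y - z) = minkowski x y - minkowski x z := by
  simp [minkowski]; ring

/-- A nonzero null vector orthogonal (w.r.t. minkowski) to a normalized null vector `n`
is a multiple of `n`. -/
lemma null_orth_null (n a : Fin 4 → ℝ) (hn0 : n 0 = 1) (hnull : minkowski n n = 0)
    (hanull : minkowski a a = 0) (horth : minkowski a n = 0) : a = a 0 • n := by
  unfold minkowski at hnull hanull horth
  rw [hn0] at hnull horth
  have key : (a 1 - a 0 * n 1)^2 + (a 2 - a 0 * n 2)^2 + (a 3 - a 0 * n 3)^2 = 0 := by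
    linear_combination hanull + a 0 ^ 2 * hnull - 2 * a 0 * horth
  have e1 : (a 1 - a 0 * n 1)^2 = 0 := by
    nlinarith [sq_nonneg (a 2 - a 0 * n 2), sq_nonneg (a 3 - a 0 * n 3)]
  have e2 : (a 2 - a 0 * n 2)^2 = 0 := by
    nlinarith [sq_nonneg (a 1 - a 0 * n 1), sq_nonneg (a 3 - a 0 * n 3)]
  have e3 : (a 3 - a 0 * n 3)^2 = 0 := by
    nlinarith [sq_nonneg (a 1 - a 0 * n 1), sq_nonneg (a 2 - a 0 * n 2)]
  rw [sq_eq_zero_iff, sub_eq_zero] at e1 e2 e3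
  funext i; fin_cases i <;> simp [Pi.smul_apply, smul_eq_mul, hn0] <;> assumption

/-- In a subspace of dimension 2 containing a normalized null vector `n` orthogonal to the
whole subspace and carrying no timelike vectors, there is a unit spacelike vector. -/
lemma exists_unit_spacelike (W : Submodule ℝ (Fin 4 → ℝ)) (hW : Module.finrank ℝ W = 2)
    (n : Fin 4 → ℝ) (hn0 : n 0 = 1) (hnull : minkowski n n = 0) (hnW : n ∈ W)
    (hWn : ∀ u ∈ W, minkowski u n = 0) (hWnt : ∀ u ∈ W, ¬ minkowski u u < 0) :
    ∃ a ∈ W, minkowski a a = 1 ∧ minkowski a n = 0 := by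
  have hnne : n ≠ 0 := by intro h; rw [h] at hn0; simp at hn0
  have : ∃ a ∈ W, a ∉ Submodule.span ℝ {n} := by
    by_contra h
    push_neg at h
    have hle : W ≤ Submodule.span ℝ {n} := h
    have := Submodule.finrank_mono hle
    rw [finrank_span_singleton hnne] at this
    omega
  obtain ⟨a, haW, hasp⟩ := this
  have hapos : 0 < minkowski a a := by
    rcases lt_or_eq_of_le (not_lt.1 (hWnt a haW)) with h | h
    · exact h
    · exfalso
      apply hasp
      rw [null_orth_null n a hn0 hnull h.symm (hWn a haW)]
      exact Submodule.smul_mem _ _ (Submodule.mem_span_singleton_self n)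
  refine ⟨(Real.sqrt (minkowski a a))⁻¹ • a, Submodule.smul_mem _ _ haW, ?_, ?_⟩
  · rw [mink_smul_left, mink_smul_right]
    have hs : Real.sqrt (minkowski a a) * Real.sqrt (minkowski a a) = minkowski a a :=
      Real.mul_self_sqrt hapos.le
    have hsne : Real.sqrt (minkowski a a) ≠ 0 := by positivity
    field_simp
    rw [Real.sq_sqrt hapos.le]
  · rw [mink_smul_left, hWn a haW, mul_zero]

noncomputable def Mmap (n m a b : Fin 4 → ℝ) : (Fin 4 → ℝ) →ₗ[ℝ] (Fin 4 → ℝ) where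
  toFun x := ((x 0 + x 1)/2) • n + ((x 0 - x 1)/2) • m + x 2 • a + x 3 • b
  map_add' x y := by
    funext i
    simp only [Pi.add_apply, Pi.smul_apply, smul_eq_mul]
    ring
  map_smul' c x := by
    funext i
    simp only [Pi.add_apply, Pi.smul_apply, smul_eq_mul, RingHom.id_apply]
    ring

lemma Mmap_apply (n m a b x : Fin 4 → ℝ) :
    Mmap n m a b x = ((x 0 + x 1)/2) • n + ((x 0 - x 1)/2) • m + x 2 • a + x 3 • b := rfl

section
variable (n m a b : Fin 4 → ℝ)
  (hnn : minkowski n n = 0) (hmm : minkowski m m = 0) (hnm : minkowski n m = -2)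
  (haa : minkowski a a = 1) (hbb : minkowski b b = 1) (hab : minkowski a b = 0)
  (hna : minkowski n a = 0) (hnb : minkowski n b = 0)
  (hma : minkowski m a = 0) (hmb : minkowski m b = 0)

include hnn hmm hnm haa hbb hab hna hnb hma hmb in
lemma Mmap_mink (x y : Fin 4 → ℝ) :
    minkowski (Mmap n m a b x) (Mmap n m a b y) = minkowski x y := by
  have hmn := (mink_comm n m) ▸ hnm
  have hba := (mink_comm a b) ▸ hab
  have han := (mink_comm n a) ▸ hna
  have hbn := (mink_comm n b) ▸ hnb
  have ham := (mink_comm m a) ▸ hma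
  have hbm := (mink_comm m b) ▸ hmb
  rw [Mmap_apply, Mmap_apply]
  simp only [mink_add_left, mink_add_right, mink_smul_left, mink_smul_right,
    hnn, hmm, hnm, hmn, haa, hbb, hab, hba, hna, han, hnb, hbn, hma, ham, hmb, hbm]
  unfold minkowski
  ring

include hnn hmm hnm haa hbb hab hna hnb hma hmb in
lemma Mmap_inj : Function.Injective (Mmap n m a b) := by
  have hmn := (mink_comm n m) ▸ hnm
  have hba := (mink_comm a b) ▸ hab
  have han := (mink_comm n a) ▸ hna
  have hbn := (mink_comm n b) ▸ hnb
  have ham := (mink_comm m a) ▸ hma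
  have hbm := (mink_comm m b) ▸ hmb
  rw [← LinearMap.ker_eq_bot, Submodule.eq_bot_iff]
  intro x hx
  rw [LinearMap.mem_ker] at hx
  have key : ∀ v, minkowski (Mmap n m a b x) v = 0 := by intro v; rw [hx]; simp [minkowski]
  have h1 := key n
  have h2 := key m
  have h3 := key a
  have h4 := key b
  simp only [Mmap_apply, mink_add_left, mink_smul_left,
    hnn, hmm, hmn, hnm, haa, hbb, hab, hba, hna, han, hnb, hbn, hma, ham, hmb, hbm]
    at h1 h2 h3 h4
  have e0 : x 0 = 0 := by linarith
  have e1 : x 1 = 0 := by linarith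
  have e2 : x 2 = 0 := by linarith
  have e3 : x 3 = 0 := by linarith
  funext i; fin_cases i <;> assumption
end

theorem stmt_8 (α β : AffineSubspace ℝ (Fin 4 → ℝ))
    (hα2 : Module.finrank ℝ α.direction = 2)
    (hβ2 : Module.finrank ℝ β.direction = 2)
    (horth : ∀ u ∈ α.direction, ∀ v ∈ β.direction, minkowski u v = 0)
    (hαnt : ∀ u ∈ α.direction, ¬ minkowski u u < 0)
    (hβnt : ∀ v ∈ β.direction, ¬ minkowski v v < 0) :
    ∃ (Λ : (Fin 4 → ℝ) ≃ₗ[ℝ] (Fin 4 → ℝ)) (c : Fin 4 → ℝ) (s : ℝ),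
      (∀ u v : Fin 4 → ℝ, minkowski (Λ u) (Λ v) = minkowski u v) ∧
      (fun x => Λ x + c) '' (α : Set (Fin 4 → ℝ)) =
        {p : Fin 4 → ℝ | p 0 - p 1 = 0 ∧ p 3 = 0} ∧
      (fun x => Λ x + c) '' (β : Set (Fin 4 → ℝ)) =
        {p : Fin 4 → ℝ | p 0 - p 1 = s ∧ p 2 = 0} := by
  -- Step 1: a common direction vector n₁ of α and β
  have hsup : α.direction ⊔ β.direction ≠ ⊤ := by
    intro h
    have he : (![1,0,0,0] : Fin 4 → ℝ) ∈ α.direction ⊔ β.direction := h ▸ Submodule.mem_top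
    rcases Submodule.mem_sup.1 he with ⟨u, hu, v, hv, huv⟩
    have h0 := horth u hu v hv
    have h1 : minkowski (u + v) (u + v) = minkowski u u + minkowski v v := by
      rw [mink_add_left, mink_add_right, mink_add_right, h0,
        show minkowski v u = 0 from (mink_comm u v) ▸ h0]
      ring
    have h2 : minkowski (u+v) (u+v) = -1 := by rw [huv]; simp [minkowski]
    have := hαnt u hu
    have := hβnt v hv
    linarith
  have hlt : Module.finrank ℝ ↥(α.direction ⊔ β.direction) < 4 := by
    have := Submodule.finrank_lt (K := ℝ) (V := Fin 4 → ℝ) hsup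
    simpa using this
  have heq := Submodule.finrank_sup_add_finrank_inf_eq α.direction β.direction
  have hpos : 0 < Module.finrank ℝ ↥(α.direction ⊓ β.direction) := by omega
  rw [Module.finrank_pos_iff_exists_ne_zero] at hpos
  obtain ⟨⟨n₁, hn₁⟩, hne₁⟩ := hpos
  have hn₁ne : n₁ ≠ 0 := by simpa [Submodule.mk_eq_zero] using hne₁
  have hn₁α : n₁ ∈ α.direction := hn₁.1
  have hn₁β : n₁ ∈ β.direction := hn₁.2
  -- n₁ is null
  have hn₁null : minkowski n₁ n₁ = 0 := horth n₁ hn₁α n₁ hn₁β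
  -- n₁ 0 ≠ 0
  have hn₁0 : n₁ 0 ≠ 0 := by
    intro h0
    apply hn₁ne
    unfold minkowski at hn₁null
    rw [h0] at hn₁null
    have h1 : n₁ 1 = 0 := by nlinarith [sq_nonneg (n₁ 1), sq_nonneg (n₁ 2), sq_nonneg (n₁ 3)]
    have h2 : n₁ 2 = 0 := by nlinarith [sq_nonneg (n₁ 1), sq_nonneg (n₁ 2), sq_nonneg (n₁ 3)]
    have h3 : n₁ 3 = 0 := by nlinarith [sq_nonneg (n₁ 1), sq_nonneg (n₁ 2), sq_nonneg (n₁ 3)]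
    funext i; fin_cases i <;> simp [h0, h1, h2, h3]
  -- normalize
  set n : Fin 4 → ℝ := (n₁ 0)⁻¹ • n₁ with hn_def
  have hn0 : n 0 = 1 := by simp [hn_def, Pi.smul_apply, inv_mul_cancel₀ hn₁0]
  have hnα : n ∈ α.direction := Submodule.smul_mem _ _ hn₁α
  have hnβ : n ∈ β.direction := Submodule.smul_mem _ _ hn₁β
  have hnn : minkowski n n = 0 := by
    rw [hn_def, mink_smul_left, mink_smul_right, hn₁null]; ring
  -- Step 2: unit spacelike a ∈ α.direction, b ∈ β.direction
  obtain ⟨a, haα, haa, han⟩ := exists_unit_spacelike α.direction hα2 n hn0 hnn hnα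
    (fun u hu => horth u hu n hnβ) hαnt
  obtain ⟨b, hbβ, hbb, hbn⟩ := exists_unit_spacelike β.direction hβ2 n hn0 hnn hnβ
    (fun v hv => (mink_comm n v) ▸ horth n hnα v hv) hβnt
  have hna : minkowski n a = 0 := (mink_comm a n) ▸ han
  have hnb : minkowski n b = 0 := (mink_comm b n) ▸ hbn
  have hab : minkowski a b = 0 := horth a haα b hbβ
  -- Step 3: the opposite null vector m
  have hnsq : n 1 * n 1 + n 2 * n 2 + n 3 * n 3 = 1 := by
    unfold minkowski at hnn; rw [hn0] at hnn; linarith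
  set m₀ : Fin 4 → ℝ := ![1, -(n 1), -(n 2), -(n 3)] with hm₀_def
  have hm₀m₀ : minkowski m₀ m₀ = 0 := by simp [minkowski, hm₀_def]; linarith
  have hm₀n : minkowski m₀ n = -2 := by simp [minkowski, hm₀_def, hn0]; linarith
  set p : ℝ := minkowski m₀ a with hp_def
  set q : ℝ := minkowski m₀ b with hq_def
  set r : ℝ := -(p^2 + q^2)/4 with hr_def
  set m : Fin 4 → ℝ := m₀ + (-p) • a + (-q) • b + r • n with hm_def
  have ham := (mink_comm m₀ a) ▸ hp_def.symm  -- minkowski a m₀ = p ... careful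
  have hmm : minkowski m m = 0 := by
    rw [hm_def]
    simp only [mink_add_left, mink_add_right, mink_smul_left, mink_smul_right,
      hm₀m₀, hm₀n, haa, hbb, hab, hna, hnb, hnn, ← hp_def, ← hq_def,
      show minkowski a m₀ = p from (mink_comm m₀ a) ▸ hp_def,
      show minkowski b m₀ = q from (mink_comm m₀ b) ▸ hq_def,
      show minkowski n m₀ = -2 from (mink_comm m₀ n) ▸ hm₀n,
      show minkowski b a = 0 from (mink_comm a b) ▸ hab,
      show minkowski a n = 0 from han, show minkowski b n = 0 from hbn]
    rw [hr_def]; ring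
  have hnm : minkowski n m = -2 := by
    rw [hm_def]
    simp only [mink_add_right, mink_smul_right, hnn, hna, hnb,
      show minkowski n m₀ = -2 from (mink_comm m₀ n) ▸ hm₀n]
    ring
  have hma : minkowski m a = 0 := by
    rw [hm_def]
    simp only [mink_add_left, mink_smul_left, ← hp_def, haa, hna,
      show minkowski b a = 0 from (mink_comm a b) ▸ hab]
    ring
  have hmb : minkowski m b = 0 := by
    rw [hm_def]
    simp only [mink_add_left, mink_smul_left, ← hq_def, hbb, hnb, hab]
    ring
  -- Step 4: the linear equivalence
  set M := Mmap n m a b with hM_def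
  have hMink : ∀ x y, minkowski (M x) (M y) = minkowski x y :=
    Mmap_mink n m a b hnn hmm hnm haa hbb hab hna hnb hma hmb
  have hMinj : Function.Injective M :=
    Mmap_inj n m a b hnn hmm hnm haa hbb hab hna hnb hma hmb
  have hMbij : Function.Bijective M := ⟨hMinj, LinearMap.injective_iff_surjective.1 hMinj⟩
  set e := LinearEquiv.ofBijective M hMbij with he_def
  set Λ := e.symm with hΛ_def
  have hEM : ∀ x, e x = M x := fun x => rfl
  have hMΛ : ∀ x, M (Λ x) = x := fun x => e.apply_symm_apply x
  have hΛM : ∀ x, Λ (M x) = x := fun x => e.symm_apply_apply x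
  have hΛmink : ∀ u v, minkowski (Λ u) (Λ v) = minkowski u v := by
    intro u v
    have := hMink (Λ u) (Λ v)
    rw [hMΛ, hMΛ] at this
    exact this.symm
  -- images of the basis vectors
  have hMn₀ : M ![1,1,0,0] = n := by
    rw [hM_def, Mmap_apply]
    norm_num
    simp [show (![1,1,0,0] : Fin 4 → ℝ) 2 = 0 from rfl, show (![1,1,0,0] : Fin 4 → ℝ) 3 = 0 from rfl]
  have hMe₂ : M ![0,0,1,0] = a := by
    rw [hM_def, Mmap_apply]
    norm_num
    simp [show (![0,0,1,0] : Fin 4 → ℝ) 2 = 1 from rfl, show (![0,0,1,0] : Fin 4 → ℝ) 3 = 0 from rfl]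
  have hMe₃ : M ![0,0,0,1] = b := by
    rw [hM_def, Mmap_apply]
    norm_num
    simp [show (![0,0,0,1] : Fin 4 → ℝ) 2 = 0 from rfl, show (![0,0,0,1] : Fin 4 → ℝ) 3 = 1 from rfl]
  have hΛn : Λ n = ![1,1,0,0] := by rw [← hMn₀, hΛM]
  have hΛa : Λ a = ![0,0,1,0] := by rw [← hMe₂, hΛM]
  have hΛb : Λ b = ![0,0,0,1] := by rw [← hMe₃, hΛM]
  -- coordinate extraction lemmas
  have hc01 : ∀ x : Fin 4 → ℝ, x 0 - x 1 = -(minkowski x ![1,1,0,0]) := by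
    intro x; simp [minkowski]; ring
  have hc2 : ∀ x : Fin 4 → ℝ, x 2 = minkowski x ![0,0,1,0] := by
    intro x; simp [minkowski]
  have hc3 : ∀ x : Fin 4 → ℝ, x 3 = minkowski x ![0,0,0,1] := by
    intro x; simp [minkowski]
  -- key: coordinates of Λ w for direction vectors w
  have hkeyα : ∀ w ∈ α.direction, (Λ w) 0 - (Λ w) 1 = 0 ∧ (Λ w) 3 = 0 := by
    intro w hw
    constructor
    · rw [hc01 (Λ w), ← hΛn, hΛmink, horth w hw n hnβ]; ring
    · rw [hc3 (Λ w), ← hΛb, hΛmink, horth w hw b hbβ]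
  have hkeyβ : ∀ w ∈ β.direction, (Λ w) 0 - (Λ w) 1 = 0 ∧ (Λ w) 2 = 0 := by
    intro w hw
    constructor
    · rw [hc01 (Λ w), ← hΛn, hΛmink, show minkowski w n = 0 from (mink_comm n w) ▸ horth n hnα w hw]
      ring
    · rw [hc2 (Λ w), ← hΛa, hΛmink, show minkowski w a = 0 from (mink_comm a w) ▸ horth a haα w hw]
  -- Step 5: points
  have hαne : (α : Set (Fin 4 → ℝ)).Nonempty := by
    rw [AffineSubspace.nonempty_iff_ne_bot]
    intro h
    rw [h, AffineSubspace.direction_bot] at hα2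
    simp at hα2
  have hβne : (β : Set (Fin 4 → ℝ)).Nonempty := by
    rw [AffineSubspace.nonempty_iff_ne_bot]
    intro h
    rw [h, AffineSubspace.direction_bot] at hβ2
    simp at hβ2
  obtain ⟨P, hP⟩ := hαne
  obtain ⟨Q, hQ⟩ := hβne
  set t : ℝ := minkowski (Q - P) a with ht_def
  set P' : Fin 4 → ℝ := t • a + P with hP'_def
  have hP' : P' ∈ α := by
    rw [hP'_def]
    exact AffineSubspace.vadd_mem_of_mem_direction (Submodule.smul_mem _ _ haα) hP
  set w : Fin 4 → ℝ := Λ (Q - P') with hw_def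
  have hQP'a : minkowski (Q - P') a = 0 := by
    rw [hP'_def, show Q - (t • a + P) = (Q - P) - t • a by ring,
      mink_sub_left, mink_smul_left, haa, ← ht_def]
    ring
  have hw2 : w 2 = 0 := by
    rw [hw_def, hc2 (Λ (Q - P')), ← hΛa, hΛmink, hQP'a]
  set s : ℝ := w 0 - w 1 with hs_def
  set c : Fin 4 → ℝ := -(Λ P') with hc_def
  have hshift : ∀ x, Λ x + c = Λ (x - P') := by
    intro x; rw [hc_def, map_sub]; ring
  refine ⟨Λ, c, s, hΛmink, ?_, ?_⟩
  · ext p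
    simp only [Set.mem_image, Set.mem_setOf_eq]
    constructor
    · rintro ⟨x, hx, rfl⟩
      rw [hshift]
      have hxd : x - P' ∈ α.direction := by
        rw [show x - P' = x -ᵥ P' from rfl]
        exact (AffineSubspace.vsub_right_mem_direction_iff_mem hP' x).2 hx
      exact hkeyα _ hxd
    · rintro ⟨hp1, hp3⟩
      refine ⟨P' + M p, ?_, ?_⟩
      · rw [SetLike.mem_coe]
        rw [show P' + M p = M p +ᵥ P' from by rw [vadd_eq_add]; exact add_comm _ _]
        refine AffineSubspace.vadd_mem_of_mem_direction ?_ hP'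
        have : M p = ((p 0 + p 1)/2) • n + p 2 • a := by
          rw [hM_def, Mmap_apply, hp3,
            show (p 0 - p 1)/2 = 0 by rw [hp1]; norm_num]
          simp only [zero_smul, add_zero, zero_div]
        rw [this]
        exact Submodule.add_mem _ (Submodule.smul_mem _ _ hnα) (Submodule.smul_mem _ _ haα)
      · rw [hshift, show P' + M p - P' = M p from add_sub_cancel_left P' (M p), hΛM]
  · ext p
    simp only [Set.mem_image, Set.mem_setOf_eq]
    constructor
    · rintro ⟨x, hx, rfl⟩
      rw [hshift]
      have hxd : x - Q ∈ β.direction := by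
        rw [show x - Q = x -ᵥ Q from rfl]
        exact (AffineSubspace.vsub_right_mem_direction_iff_mem hQ x).2 hx
      have hdecomp : Λ (x - P') = Λ (x - Q) + w := by
        rw [hw_def, ← map_add, show x - Q + (Q - P') = x - P' by ring]
      obtain ⟨hk1, hk2⟩ := hkeyβ _ hxd
      rw [hdecomp]
      constructor
      · simp only [Pi.add_apply]
        rw [hs_def]; linarith
      · simp only [Pi.add_apply]
        rw [hw2, hk2]; ring
    · rintro ⟨hp1, hp2⟩
      refine ⟨Q + M (p - w), ?_, ?_⟩
      · rw [SetLike.mem_coe]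
        rw [show Q + M (p - w) = M (p - w) +ᵥ Q from by rw [vadd_eq_add]; exact add_comm _ _]
        refine AffineSubspace.vadd_mem_of_mem_direction ?_ hQ
        have hpw1 : (p - w) 0 - (p - w) 1 = 0 := by
          simp only [Pi.sub_apply]; rw [hs_def] at hp1; linarith
        have hpw2 : (p - w) 2 = 0 := by
          simp only [Pi.sub_apply]; rw [hw2, hp2]; ring
        have : M (p - w) = (((p-w) 0 + (p-w) 1)/2) • n + (p-w) 3 • b := by
          rw [hM_def, Mmap_apply, hpw2, show ((p-w) 0 - (p-w) 1)/2 = 0 by rw [hpw1]; norm_num]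
          simp only [zero_smul, add_zero, zero_div]
        rw [this]
        exact Submodule.add_mem _ (Submodule.smul_mem _ _ hnβ) (Submodule.smul_mem _ _ hbβ)
      · rw [hshift, show Q + M (p - w) - P' = M (p - w) + (Q - P') from by
            rw [add_sub_assoc, sub_eq_add_neg, sub_eq_add_neg, add_left_comm, ← sub_eq_add_neg p w, ← sub_eq_add_neg Q P'],
          map_add, hΛM, hw_def]
        abel
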